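/- Let (R, m, k) be a Noetherian local ring and C a semidualizing R-module. If I is an Artinian C-injective R-module, written I = Hom_R(C, I') with I' injective, then I' is Artinian, hence a finite direct sum of copies of E_R(k). -/

import Mathlib

open CategoryTheory

universe u

variable (R : Type u) [CommRing R]

/-- `M` has the `t(p)`-property. -/
def HasTProperty (p : Ideal R) (M : Type u) [AddCommGroup M] [Module R M] : Prop :=
  (∀ r : R, r ∉ p → Function.Bijective (fun x : M => r • x)) ∧
    ∀ x : M, ∃ m : ℕ, 1 ≤ m ∧ ∀ a ∈ p ^ m, a • x = 0

/-- `E` is an injective envelope of `M`. -/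
def IsInjectiveEnvelope (M E : Type u) [AddCommGroup M] [Module R M]
    [AddCommGroup E] [Module R E] : Prop :=
  Module.Injective R E ∧ ∃ f : M →ₗ[R] E, Function.Injective f ∧
    ∀ N : Submodule R E, N ≠ ⊥ → N ⊓ LinearMap.range f ≠ ⊥

/-- `C` is a semidualizing `R`-module. -/
def IsSemidualizing (C : Type u) [AddCommGroup C] [Module R C] : Prop :=
  Module.Finite R C ∧ Function.Bijective (LinearMap.lsmul R C) ∧
    ∀ i : ℕ, 0 < i → Subsingleton
      (((Ext R (ModuleCat.{u} R) i).obj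
        (Opposite.op (ModuleCat.of R C))).obj (ModuleCat.of R C))

/-- `C` has finite injective dimension over `R`. -/
def HasFiniteInjectiveDimension (C : Type u) [AddCommGroup C] [Module R C] : Prop :=
  ∃ n : ℕ, ∀ (N : ModuleCat.{u} R) (i : ℕ), n < i →
    Subsingleton (((Ext R (ModuleCat.{u} R) i).obj (Opposite.op N)).obj (ModuleCat.of R C))

/-- `C` is a dualizing `R`-module. -/
def IsDualizing (C : Type u) [AddCommGroup C] [Module R C] : Prop :=
  IsSemidualizing R C ∧ HasFiniteInjectiveDimension R C

/-- `M` is `C`-injective. -/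
def IsCInjective (C : Type u) [AddCommGroup C] [Module R C]
    (M : Type u) [AddCommGroup M] [Module R M] : Prop :=
  ∃ (I : Type u) (_ : AddCommGroup I) (_ : Module R I),
    Module.Injective R I ∧ Nonempty (M ≃ₗ[R] (C →ₗ[R] I))

/-- `Tor_i^R(M,N)` as a module category object. -/
noncomputable def TorMod (i : ℕ) (M N : Type u) [AddCommGroup M] [Module R M]
    [AddCommGroup N] [Module R N] : ModuleCat.{u} R :=
  ((Tor (ModuleCat.{u} R) i).obj (ModuleCat.of R M)).obj (ModuleCat.of R N)

/-- The Krull dimension of a module, as dimension of `R ⧸ Ann M`. -/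
noncomputable def moduleKrullDim (M : Type u) [AddCommGroup M] [Module R M] :
    WithBot (WithTop ℕ) :=
  ringKrullDim (R ⧸ Module.annihilator R M)


section Helpers
variable {R : Type u} [CommRing R]



/-- A finite product of injective modules is injective. -/
lemma module_injective_pi {E : Type u} [AddCommGroup E] [Module R E]
    (hE : Module.Injective R E) (n : ℕ) : Module.Injective R (Fin n → E) := by
  constructor
  intro X Y _ _ _ _ f hf g
  have H : ∀ i : Fin n, ∃ h : Y →ₗ[R] E, ∀ x, h (f x) = (LinearMap.proj i).comp g x := fun i =>
    hE.out f hf ((LinearMap.proj i).comp g)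
  choose h hh using H
  exact ⟨LinearMap.pi h, fun x => funext fun i => hh i x⟩

lemma extend_from_nonunit {E : Type u} [AddCommGroup E] [Module R E]
    (V : Submodule R E) (x : E) (hx : x ∉ V) (z : E) (r : R) (hz : r • x = z)
    (hzV : z ∈ V) (hru : IsUnit r) : False := by
  rcases hru with ⟨u, rfl⟩
  have : x = (↑u⁻¹ : R) • z := by
    rw [← hz, smul_smul, Units.inv_mul, one_smul]
  exact hx (this ▸ V.smul_mem _ hzV)

/-- Key lemma: every nonzero element of `Fin n → E` has a nonzero multiple with all
components in the essential "socle" submodule `V`. -/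
lemma exists_smul_mem_pi [IsLocalRing R] {E : Type u} [AddCommGroup E] [Module R E]
    (V : Submodule R E)
    (hess : ∀ N : Submodule R E, N ≠ ⊥ → N ⊓ V ≠ ⊥)
    (hkill : ∀ a ∈ IsLocalRing.maximalIdeal R, ∀ y ∈ V, a • y = 0)
    {n : ℕ} (x : Fin n → E) (hx : x ≠ 0) :
    ∃ r : R, r • x ≠ 0 ∧ ∀ i, r • x i ∈ V := by
  classical
  suffices H : ∀ m : ℕ, ∀ x : Fin n → E, x ≠ 0 →
      (Finset.univ.filter (fun i => x i ∉ V)).card ≤ m →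
      ∃ r : R, r • x ≠ 0 ∧ ∀ i, r • x i ∈ V by
    exact H _ x hx le_rfl
  intro m
  induction m with
  | zero =>
    intro x hx hcard
    refine ⟨1, by simpa using hx, fun i => ?_⟩
    rw [one_smul]
    by_contra hi
    have : i ∈ Finset.univ.filter (fun i => x i ∉ V) := by simp [hi]
    simp [Finset.card_eq_zero.mp (Nat.le_zero.mp hcard)] at this
  | succ m ih =>
    intro x hx hcard
    by_cases hall : ∀ i, x i ∈ V
    · exact ⟨1, by simpa using hx, fun i => by rw [one_smul]; exact hall i⟩
    push_neg at hall
    obtain ⟨i₀, hi₀⟩ := hall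
    have hx0 : x i₀ ≠ 0 := fun h => hi₀ (h ▸ V.zero_mem)
    have hN : Submodule.span R {x i₀} ≠ ⊥ := by
      simpa [Submodule.span_singleton_eq_bot] using hx0
    obtain ⟨z, hz, hz0⟩ := (Submodule.ne_bot_iff _).mp (hess _ hN)
    obtain ⟨hzN, hzV⟩ := Submodule.mem_inf.mp hz
    obtain ⟨r, hr⟩ := Submodule.mem_span_singleton.mp hzN
    have hrm : r ∈ IsLocalRing.maximalIdeal R := by
      rw [IsLocalRing.mem_maximalIdeal, mem_nonunits_iff]
      exact fun hru => extend_from_nonunit V (x i₀) hi₀ z r hr hzV hru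
    have hxi0 : (r • x) i₀ = z := by simpa using hr
    have hx' : r • x ≠ 0 := by
      intro h
      exact hz0 (by rw [← hxi0, h, Pi.zero_apply])
    have hmono : (Finset.univ.filter (fun i => (r • x) i ∉ V)) ⊆
        (Finset.univ.filter (fun i => x i ∉ V)).erase i₀ := by
      intro i hi
      simp only [Finset.mem_filter, Finset.mem_univ, true_and] at hi
      refine Finset.mem_erase.mpr ⟨?_, ?_⟩
      · rintro rfl; exact hi (hxi0 ▸ hzV)
      · simp only [Finset.mem_filter, Finset.mem_univ, true_and]
        intro hiV
        exact hi (by simpa using (hkill r hrm (x i) hiV) ▸ V.zero_mem)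
    have hcard' : (Finset.univ.filter (fun i => (r • x) i ∉ V)).card ≤ m := by
      calc _ ≤ ((Finset.univ.filter (fun i => x i ∉ V)).erase i₀).card :=
            Finset.card_le_card hmono
        _ ≤ (Finset.univ.filter (fun i => x i ∉ V)).card - 1 := by
            rw [Finset.card_erase_of_mem (by simp [hi₀])]
        _ ≤ m := by omega
    obtain ⟨r', hr'0, hr'V⟩ := ih (r • x) hx' hcard'
    refine ⟨r' * r, ?_, fun i => ?_⟩
    · rwa [mul_smul]
    · rw [mul_smul]; exact hr'V i



/-- If `C` is finite and faithful (via `lsmul` injective) and `I'` is injective, then `I'` is a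
quotient of a finite power of `C →ₗ[R] I'`. -/
lemma isArtinian_of_hom_artinian
    (C : Type u) [AddCommGroup C] [Module R C] [Module.Finite R C]
    (hfaith : Function.Injective (LinearMap.lsmul R C))
    (I' : Type u) [AddCommGroup I'] [Module R I'] (hI' : Module.Injective R I')
    (hart : IsArtinian R (C →ₗ[R] I')) : IsArtinian R I' := by
  obtain ⟨n, v, hv⟩ := Module.Finite.exists_fin (R := R) (M := C)
  set φ : R →ₗ[R] (Fin n → C) := LinearMap.pi (fun i => LinearMap.toSpanSingleton R C (v i))
  have hφ : Function.Injective φ := by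
    rw [injective_iff_map_eq_zero]
    intro r hr
    have h1 : ∀ i, r • v i = 0 := fun i => congrFun hr i
    have h2 : LinearMap.lsmul R C r = 0 := by
      ext c
      have hc : c ∈ Submodule.span R (Set.range v) := hv ▸ Submodule.mem_top
      have : Submodule.span R (Set.range v) ≤ LinearMap.ker (LinearMap.lsmul R C r) := by
        rw [Submodule.span_le]
        rintro - ⟨i, rfl⟩
        simpa using h1 i
      simpa using this hc
    have := hfaith (h2.trans (map_zero (LinearMap.lsmul R C)).symm)
    exact this
  set Φ : (Fin n → (C →ₗ[R] I')) →ₗ[R] I' :=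
    ∑ i : Fin n, (LinearMap.applyₗ (v i)).comp (LinearMap.proj i)
  have hΦ : Function.Surjective Φ := by
    intro x
    obtain ⟨h, hh⟩ := hI'.out φ hφ (LinearMap.toSpanSingleton R I' x)
    refine ⟨fun i => h.comp (LinearMap.single R (fun _ => C) i), ?_⟩
    have : Φ (fun i => h.comp (LinearMap.single R (fun _ => C) i)) =
        ∑ i : Fin n, h (Pi.single i (v i)) := by
      simp [Φ, LinearMap.sum_apply]
    rw [this, ← map_sum, Finset.univ_sum_single]
    have h1 : φ 1 = v := by
      funext i
      simp [φ]
    have := hh 1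
    rw [h1] at this
    simpa using this
  exact isArtinian_of_surjective _ Φ hΦ

/-- In an Artinian module over a local ring, the socle (torsion by the maximal ideal)
is essential. -/
lemma socle_essential [IsLocalRing R] {M : Type u} [AddCommGroup M] [Module R M]
    [IsArtinian R M] (N : Submodule R M) (hN : N ≠ ⊥) :
    N ⊓ Submodule.torsionBySet R M (IsLocalRing.maximalIdeal R) ≠ ⊥ := by
  obtain ⟨P, ⟨hPN, hP0⟩, hmin⟩ := IsArtinian.set_has_minimal
    {P : Submodule R M | P ≤ N ∧ P ≠ ⊥} ⟨N, le_rfl, hN⟩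
  obtain ⟨x, hxP, hx0⟩ := (Submodule.ne_bot_iff _).mp hP0
  have hspan : Submodule.span R {x} = P := by
    have h1 : Submodule.span R {x} ≤ P := by simpa [Submodule.span_le] using hxP
    have h2 : Submodule.span R {x} ≠ ⊥ := by simpa [Submodule.span_singleton_eq_bot] using hx0
    by_contra hne
    exact hmin _ ⟨h1.trans hPN, h2⟩ (lt_of_le_of_ne h1 hne)
  have hfg : P.FG := hspan ▸ Submodule.fg_span_singleton x
  have hQle : IsLocalRing.maximalIdeal R • P ≤ P := Submodule.smul_le_right
  have hQbot : IsLocalRing.maximalIdeal R • P = ⊥ := by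
    by_contra hQ0
    have hQP : IsLocalRing.maximalIdeal R • P ≠ P := by
      intro h
      exact hP0 (Submodule.eq_bot_of_le_smul_of_le_jacobson_bot
        (IsLocalRing.maximalIdeal R) P hfg h.ge
        (IsLocalRing.jacobson_eq_maximalIdeal (⊥ : Ideal R) bot_ne_top).ge)
    exact hmin _ ⟨hQle.trans hPN, hQ0⟩ (lt_of_le_of_ne hQle hQP)
  rw [Submodule.ne_bot_iff]
  refine ⟨x, Submodule.mem_inf.mpr ⟨hPN hxP, ?_⟩, hx0⟩
  rw [Submodule.mem_torsionBySet_iff]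
  rintro ⟨a, ha⟩
  have : a • x ∈ IsLocalRing.maximalIdeal R • P := Submodule.smul_mem_smul ha hxP
  rw [hQbot] at this
  simpa using this



lemma residueField_smul_eq_zero [IsLocalRing R] {a : R}
    (ha : a ∈ IsLocalRing.maximalIdeal R) (c : IsLocalRing.ResidueField R) : a • c = 0 := by
  rw [Algebra.smul_def]
  have ha0 : algebraMap R (IsLocalRing.ResidueField R) a = 0 := by
    have : Ideal.Quotient.mk (IsLocalRing.maximalIdeal R) a = 0 :=
      Ideal.Quotient.eq_zero_iff_mem.mpr ha
    exact this
  rw [ha0, zero_mul]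

/-- Finite-dimensionality of an Artinian vector space. -/
lemma finite_of_artinian {K V : Type u} [Field K] [AddCommGroup V] [Module K V]
    (h : IsArtinian K V) : Module.Finite K V := by
  haveI := h
  have hli := Module.Basis.ofVectorSpaceIndex.linearIndependent K V
  have hfin : (Module.Basis.ofVectorSpaceIndex K V).Finite :=
    IsArtinian.finite_of_linearIndependent hli
  haveI := hfin.to_subtype
  exact Module.Finite.of_basis (Module.Basis.ofVectorSpace K V)


end Helpers

theorem stmt4 [IsNoetherianRing R] [IsLocalRing R]
    (C : Type u) [AddCommGroup C] [Module R C] (hC : IsSemidualizing R C)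
    (I' : Type u) [AddCommGroup I'] [Module R I'] (hI' : Module.Injective R I')
    (hart : IsArtinian R (C →ₗ[R] I'))
    (E : Type u) [AddCommGroup E] [Module R E]
    (hE : IsInjectiveEnvelope R (IsLocalRing.ResidueField R) E) :
    IsArtinian R I' ∧ ∃ n : ℕ, Nonempty (I' ≃ₗ[R] (Fin n → E)) := by
  classical
  haveI := hart
  haveI : Module.Finite R C := hC.1
  haveI hartI : IsArtinian R I' := isArtinian_of_hom_artinian C hC.2.1.injective I' hI' hart
  refine ⟨hartI, ?_⟩
  obtain ⟨hEinj, f, hfinj, hfess⟩ := hE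
  set K := IsLocalRing.ResidueField R with hKdef
  set S : Submodule R I' := Submodule.torsionBySet R I' (IsLocalRing.maximalIdeal R) with hSdef
  letI : Module K ↥S :=
    (inferInstance : Module (R ⧸ IsLocalRing.maximalIdeal R)
      ↥(Submodule.torsionBySet R I' (IsLocalRing.maximalIdeal R)))
  letI : IsScalarTower R K ↥S :=
    (inferInstance : IsScalarTower R (R ⧸ IsLocalRing.maximalIdeal R)
      ↥(Submodule.torsionBySet R I' (IsLocalRing.maximalIdeal R)))
  haveI hartS : IsArtinian K ↥S := isArtinian_of_tower R inferInstance
  haveI : Module.Finite K ↥S := finite_of_artinian hartS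
  set n := Module.finrank K ↥S with hndef
  have e : ↥S ≃ₗ[K] (Fin n → K) := (Module.finBasis K ↥S).equivFun
  have eR : ↥S ≃ₗ[R] (Fin n → K) := e.restrictScalars R
  -- the componentwise map into E^n
  set F : (Fin n → K) →ₗ[R] (Fin n → E) := LinearMap.pi (fun i => f.comp (LinearMap.proj i))
    with hFdef
  have hFinj : Function.Injective F := by
    intro u v h
    funext i
    apply hfinj
    simpa [F] using congrFun h i
  set g' : ↥S →ₗ[R] (Fin n → E) := F.comp (eR : ↥S →ₗ[R] (Fin n → K)) with hg'def
  have hg'inj : Function.Injective g' := by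
    intro u v h
    exact eR.injective (hFinj h)
  have hkillV : ∀ a ∈ IsLocalRing.maximalIdeal R, ∀ y ∈ LinearMap.range f, a • y = 0 := by
    rintro a ha y ⟨c, rfl⟩
    rw [← map_smul, residueField_smul_eq_zero ha c, map_zero]
  have hmem : ∀ z : Fin n → E, (∀ i, z i ∈ LinearMap.range f) → z ∈ LinearMap.range g' := by
    intro z hz
    choose c hc using hz
    refine ⟨eR.symm c, ?_⟩
    show F (eR (eR.symm c)) = z
    rw [LinearEquiv.apply_symm_apply]
    funext i
    simp [F, hc i]
  have hg'ess : ∀ N : Submodule R (Fin n → E), N ≠ ⊥ → N ⊓ LinearMap.range g' ≠ ⊥ := by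
    intro N hN
    obtain ⟨x, hxN, hx0⟩ := (Submodule.ne_bot_iff N).mp hN
    obtain ⟨r, hr0, hrV⟩ := exists_smul_mem_pi (LinearMap.range f) hfess hkillV x hx0
    rw [Submodule.ne_bot_iff]
    refine ⟨r • x, Submodule.mem_inf.mpr ⟨N.smul_mem r hxN, hmem _ ?_⟩, hr0⟩
    intro i
    simpa using hrV i
  -- extend g' along S ↪ I' using injectivity of E^n
  obtain ⟨h, hh⟩ := (module_injective_pi hEinj n).out S.subtype
    (Submodule.injective_subtype S) g'
  have hinj : Function.Injective h := by
    rw [← LinearMap.ker_eq_bot]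
    by_contra hker
    obtain ⟨x, hx, hx0⟩ := (Submodule.ne_bot_iff _).mp (socle_essential (LinearMap.ker h) hker)
    obtain ⟨hxk, hxS⟩ := Submodule.mem_inf.mp hx
    have hgx : g' ⟨x, hxS⟩ = 0 := by
      rw [← hh ⟨x, hxS⟩]
      exact hxk
    have : (⟨x, hxS⟩ : ↥S) = 0 := hg'inj (by rw [hgx, map_zero])
    exact hx0 (by simpa using congrArg Subtype.val this)
  -- retraction of h using injectivity of I'
  obtain ⟨π, hπ⟩ := hI'.out h hinj LinearMap.id
  have hπinj : Function.Injective π := by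
    rw [← LinearMap.ker_eq_bot]
    by_contra hker
    obtain ⟨z, hz, hz0⟩ := (Submodule.ne_bot_iff _).mp (hg'ess (LinearMap.ker π) hker)
    obtain ⟨hzk, s, hs⟩ := Submodule.mem_inf.mp hz
    have h1 : π z = (s : I') := by
      rw [← hs, ← hh s]
      exact hπ (S.subtype s)
    have h2 : (s : I') = 0 := by rw [← h1]; exact hzk
    have : s = 0 := Subtype.ext h2
    exact hz0 (by rw [← hs, this, map_zero])
  have hsurj : Function.Surjective h := by
    intro y
    refine ⟨π y, hπinj ?_⟩
    rw [hπ (π y)]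
    rfl
  exact ⟨n, ⟨LinearEquiv.ofBijective h ⟨hinj, hsurj⟩⟩⟩
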